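/- Let I be an admissible ideal of kQ, α an arrow of Q, and fix an admissible order on the set of paths of Q. Then I possesses a strict α-monomial Gröbner basis if and only if the reduced Gröbner basis of I is strict α-monomial. In particular, if 𝒢_{p,q} and 𝒢'_{p',q'} are two strict α-monomial Gröbner bases for I, then p' = p and q' = q. -/

import Mathlib

/-! Scaffolding: path algebras of quivers, admissible ideals, monomial arrow removal,
admissible orders and Gröbner bases, following Green. -/

open Quiver

/-- The type of all paths in a quiver `V` (with arbitrary source and target). -/
abbrev PathsIn (V : Type) [Quiver.{0} V] : Type := Σ a b : V, Quiver.Path a b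

namespace PathsIn

variable {V : Type} [Quiver.{0} V]

/-- The length of a path. -/
def len (u : PathsIn V) : ℕ := u.2.2.length

/-- `u.Divides w` : the path `u` is a subpath of (divides) the path `w`,
i.e. `w = r·u·s` for (possibly trivial) paths `r`, `s`. -/
def Divides (u w : PathsIn V) : Prop :=
  ∃ (a d : V) (r : Quiver.Path a u.1) (s : Quiver.Path u.2.1 d),
    w = ⟨a, d, (r.comp u.2.2).comp s⟩

/-- `u.ProperlyDivides w` : `u` is a proper subpath of `w`. -/
def ProperlyDivides (u w : PathsIn V) : Prop := u.Divides w ∧ u ≠ w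

/-- `s.OverlapsLeftWith t` : the path `s` overlaps with the path `t` from the left,
i.e. `t = r₁·r₂` and `s = r₂·r₃` for paths `r₁, r₂, r₃` with `r₂` non-trivial.
(Equivalently, `t` overlaps with `s` from the right.) -/
def OverlapsLeftWith (s t : PathsIn V) : Prop :=
  ∃ (x : V) (r₁ : Quiver.Path t.1 x) (r₂ : Quiver.Path x t.2.1)
    (r₃ : Quiver.Path t.2.1 s.2.1),
      0 < r₂.length ∧ t = ⟨t.1, t.2.1, r₁.comp r₂⟩ ∧ s = ⟨x, s.2.1, r₂.comp r₃⟩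

end PathsIn

/-- The path of length one corresponding to an arrow. -/
def arrowPath {V : Type} [Quiver.{0} V] {a b : V} (α : a ⟶ b) : PathsIn V :=
  ⟨a, b, α.toPath⟩

/-- A path `w` avoids the arrow `α` if `α` is not a subpath of `w`. -/
def AvoidsArrow {V : Type} [Quiver.{0} V] {a b : V} (α : a ⟶ b) (w : PathsIn V) : Prop :=
  ¬ (arrowPath α).Divides w

/-- `IsPathAlgebra k V A` : the `k`-algebra `A` is the path algebra `kQ` of the quiver `V`:
it has a `k`-basis indexed by the paths of `V`, multiplication of basis elements is given by
concatenation of composable paths (and is zero on non-composable ones), and the identity is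
the sum of the trivial paths. -/
structure IsPathAlgebra (k : Type) [Field k] (V : Type) [Quiver.{0} V] [Fintype V]
    (A : Type) [Ring A] [Algebra k A] : Type where
  basis : Module.Basis (PathsIn V) k A
  mul_matched : ∀ {a b c : V} (p : Quiver.Path a b) (q : Quiver.Path b c),
    basis ⟨a, b, p⟩ * basis ⟨b, c, q⟩ = basis ⟨a, c, p.comp q⟩
  mul_unmatched : ∀ {a b b' c : V} (p : Quiver.Path a b) (q : Quiver.Path b' c),
    b ≠ b' → basis ⟨a, b, p⟩ * basis ⟨b', c, q⟩ = 0
  one_def : (1 : A) = ∑ a : V, basis ⟨a, a, Quiver.Path.nil⟩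

namespace IsPathAlgebra

variable {k : Type} [Field k] {V : Type} [Quiver.{0} V] [Fintype V]
  {A : Type} [Ring A] [Algebra k A]

/-- The path `u` occurs in the element `z` of the path algebra (i.e. `u` has a non-zero
coefficient in `z`). -/
def OccursIn (PA : IsPathAlgebra k V A) (u : PathsIn V) (z : A) : Prop :=
  PA.basis.repr z u ≠ 0

/-- The path `u` occurs in the subset `T` of the path algebra. -/
def OccursInSet (PA : IsPathAlgebra k V A) (u : PathsIn V) (T : Set A) : Prop :=
  ∃ z ∈ T, PA.OccursIn u z

/-- An element of the path algebra avoids the arrow `α` if every path occurring in it does. -/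
def ElemAvoids (PA : IsPathAlgebra k V A) {a b : V} (α : a ⟶ b) (z : A) : Prop :=
  ∀ u : PathsIn V, PA.OccursIn u z → AvoidsArrow α u

/-- A relation: a linear combination of paths of length at least two having a common source
and a common target. -/
def IsRelation (PA : IsPathAlgebra k V A) (z : A) : Prop :=
  (∀ u : PathsIn V, PA.OccursIn u z → 2 ≤ u.len) ∧
  (∀ u v : PathsIn V, PA.OccursIn u z → PA.OccursIn v z → u.1 = v.1 ∧ u.2.1 = v.2.1)

end IsPathAlgebra

/-- The two-sided ideal of a ring generated by a subset, as a set: the additive closure of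
the set of elements `r * t * s` with `t` in the generating set. -/
def ringIdealSpan {A : Type} [Ring A] (T : Set A) : Set A :=
  (AddSubgroup.closure {y : A | ∃ r s : A, ∃ t ∈ T, y = r * t * s} : AddSubgroup A)

/-- An admissible ideal of the path algebra: a two-sided ideal `I` with `J^n ⊆ I ⊆ J²`
for some `n`, where `J` is the arrow ideal. -/
def IsAdmissibleIdeal {k : Type} [Field k] {V : Type} [Quiver.{0} V] [Fintype V]
    {A : Type} [Ring A] [Algebra k A] (PA : IsPathAlgebra k V A) (I : Set A) : Prop :=
  I = ringIdealSpan I ∧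
  (∃ n : ℕ, ∀ u : PathsIn V, n ≤ u.len → PA.basis u ∈ I) ∧
  (∀ z ∈ I, ∀ u : PathsIn V, PA.OccursIn u z → 2 ≤ u.len)

/-- A presentation of the quotient of an algebra `A` by (the set underlying) a two-sided
ideal `I`: a surjective algebra homomorphism with kernel `I`. -/
structure QuotPresentation (k : Type) [Field k] {A : Type} [Ring A] [Algebra k A]
    (I : Set A) (B : Type) [Ring B] [Algebra k B] : Type where
  proj : A →ₐ[k] B
  surj : Function.Surjective proj
  ker : ∀ z : A, proj z = 0 ↔ z ∈ I

section StrictMonomial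

variable {k : Type} [Field k] {V : Type} [Quiver.{0} V] [Fintype V]
  {A : Type} [Ring A] [Algebra k A]

/-- The path `pαq`. -/
def pathPAQ {V : Type} [Quiver.{0} V] {va vb xp yq : V} (α : va ⟶ vb)
    (p : Quiver.Path xp va) (q : Quiver.Path vb yq) : PathsIn V :=
  ⟨xp, yq, (p.comp α.toPath).comp q⟩

/-- Properties (P) for a subset `T` of the path algebra, relative to the arrow `α` and the
paths `p`, `q`:  (P1) every element of `T` other than `pαq` avoids `α`;
(P2) `p` does not overlap from the left with any path occurring in `T`;
(P2ᵒᵖ) `q` does not overlap from the right with any path occurring in `T`;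
(P3) no path occurring in `T` divides `p` or `q`. -/
structure SatisfiesP (PA : IsPathAlgebra k V A) {va vb xp yq : V} (α : va ⟶ vb)
    (T : Set A) (p : Quiver.Path xp va) (q : Quiver.Path vb yq) : Prop where
  p1 : ∀ z ∈ T, z ≠ PA.basis (pathPAQ α p q) → PA.ElemAvoids α z
  p2 : ∀ u : PathsIn V, PA.OccursInSet u T →
    ¬ PathsIn.OverlapsLeftWith ⟨xp, va, p⟩ u
  p2op : ∀ u : PathsIn V, PA.OccursInSet u T →
    ¬ PathsIn.OverlapsLeftWith u ⟨vb, yq, q⟩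
  p3 : ∀ u : PathsIn V, PA.OccursInSet u T →
    ¬ u.Divides ⟨xp, va, p⟩ ∧ ¬ u.Divides ⟨vb, yq, q⟩

/-- The common context for (strict) `α`-monomial generating sets: `p`, `q` avoid `α`,
at most one of them is trivial, and `T` is a finite generating set of relations for `I`. -/
structure IsMonGenData (PA : IsPathAlgebra k V A) {va vb xp yq : V} (α : va ⟶ vb)
    (I : Set A) (T : Set A) (p : Quiver.Path xp va) (q : Quiver.Path vb yq) : Prop where
  finite : T.Finite
  rels : ∀ t ∈ T, PA.IsRelation t
  gen : I = ringIdealSpan T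
  p_avoids : AvoidsArrow α (⟨xp, va, p⟩ : PathsIn V)
  q_avoids : AvoidsArrow α (⟨vb, yq, q⟩ : PathsIn V)
  not_both_trivial : 0 < p.length ∨ 0 < q.length

/-- `T` is a strict `α`-monomial generating set for the ideal `I`, relative to the paths
`p` and `q`. -/
structure IsStrictMonomialGenSet (PA : IsPathAlgebra k V A) {va vb xp yq : V} (α : va ⟶ vb)
    (I : Set A) (T : Set A) (p : Quiver.Path xp va) (q : Quiver.Path vb yq) : Prop where
  data : IsMonGenData PA α I T p q
  mem : PA.basis (pathPAQ α p q) ∈ T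
  others_avoid : ∀ z ∈ T, z ≠ PA.basis (pathPAQ α p q) → PA.ElemAvoids α z
  no_proper_sub : ∀ u : PathsIn V, u.ProperlyDivides (pathPAQ α p q) → PA.basis u ∉ I
  no_overlap_p : ∀ u : PathsIn V, PA.OccursInSet u T →
    ¬ PathsIn.OverlapsLeftWith ⟨xp, va, p⟩ u
  no_overlap_q : ∀ u : PathsIn V, PA.OccursInSet u T →
    ¬ PathsIn.OverlapsLeftWith u ⟨vb, yq, q⟩
  no_divide : ∀ u : PathsIn V, PA.OccursInSet u T →
    ¬ u.Divides ⟨xp, va, p⟩ ∧ ¬ u.Divides ⟨vb, yq, q⟩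

/-- `T` is an `α`-monomial generating set: every element of `T` which is not (a scalar
multiple of) a path avoids `α`. -/
structure IsMonomialGenSet (PA : IsPathAlgebra k V A) {va vb : V} (α : va ⟶ vb)
    (I : Set A) (T : Set A) : Prop where
  finite : T.Finite
  rels : ∀ t ∈ T, PA.IsRelation t
  gen : I = ringIdealSpan T
  mono : ∀ t ∈ T, (∃ (u : PathsIn V) (c : k), c ≠ 0 ∧ t = c • PA.basis u) ∨ PA.ElemAvoids α t

end StrictMonomial

section Groebner

variable {k : Type} [Field k] {V : Type} [Quiver.{0} V] [Fintype V]
  {A : Type} [Ring A] [Algebra k A]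

/-- An admissible order on the set of paths of a quiver: a well-order compatible with left
and right multiplication, for which every subpath of a path precedes it. -/
structure AdmissibleOrder (V : Type) [Quiver.{0} V] : Type 1 where
  le : PathsIn V → PathsIn V → Prop
  refl : ∀ u, le u u
  trans : ∀ u v w, le u v → le v w → le u w
  antisymm : ∀ u v, le u v → le v u → u = v
  total : ∀ u v, le u v ∨ le v u
  wf : WellFounded (fun u w => le u w ∧ u ≠ w)
  right_compat : ∀ (u w : PathsIn V), le u w → ∀ (hc : u.2.1 = w.2.1) (z : V)
    (r : Quiver.Path w.2.1 z),
      le ⟨u.1, z, u.2.2.comp (r.cast hc.symm rfl)⟩ ⟨w.1, z, w.2.2.comp r⟩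
  left_compat : ∀ (u w : PathsIn V), le u w → ∀ (hc : u.1 = w.1) (z : V)
    (r : Quiver.Path z w.1),
      le ⟨z, u.2.1, (r.cast rfl hc.symm).comp u.2.2⟩ ⟨z, w.2.1, r.comp w.2.2⟩
  subpath_le : ∀ u w, PathsIn.Divides u w → le u w

/-- `IsTip PA O z u` : the path `u` is the `O`-largest path occurring in `z`. -/
def IsTip (PA : IsPathAlgebra k V A) (O : AdmissibleOrder V) (z : A) (u : PathsIn V) : Prop :=
  PA.OccursIn u z ∧ ∀ w : PathsIn V, PA.OccursIn w z → O.le w u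

/-- `G` is a Gröbner basis for the ideal `I` with respect to the admissible order `O`:
`G ⊆ I` and the tip of every non-zero element of `I` is divisible by the tip of some
element of `G`. -/
def IsGroebnerBasis (PA : IsPathAlgebra k V A) (O : AdmissibleOrder V)
    (I : Set A) (G : Set A) : Prop :=
  G ⊆ I ∧ ∀ z ∈ I, z ≠ 0 → ∃ g ∈ G, ∃ tg tz : PathsIn V,
    IsTip PA O g tg ∧ IsTip PA O z tz ∧ tg.Divides tz

/-- A strict `α`-monomial Gröbner basis for `I`, relative to the paths `p`, `q` (which
avoid `α`, have the appropriate endpoints, and at most one of which is trivial):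
`pαq ∈ 𝒢`, every other element of `𝒢` avoids `α`, and no tip of an element of `𝒢`
overlaps with `p` from the right, overlaps with `q` from the left, or divides `p` or `q`. -/
structure IsStrictMonomialGB (PA : IsPathAlgebra k V A) (O : AdmissibleOrder V)
    {va vb xp yq : V} (α : va ⟶ vb) (I : Set A) (G : Set A)
    (p : Quiver.Path xp va) (q : Quiver.Path vb yq) : Prop where
  gb : IsGroebnerBasis PA O I G
  p_avoids : AvoidsArrow α (⟨xp, va, p⟩ : PathsIn V)
  q_avoids : AvoidsArrow α (⟨vb, yq, q⟩ : PathsIn V)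
  not_both_trivial : 0 < p.length ∨ 0 < q.length
  mem : PA.basis (pathPAQ α p q) ∈ G
  others_avoid : ∀ z ∈ G, z ≠ PA.basis (pathPAQ α p q) → PA.ElemAvoids α z
  tips_no_overlap_p : ∀ g ∈ G, ∀ u : PathsIn V, IsTip PA O g u →
    ¬ PathsIn.OverlapsLeftWith ⟨xp, va, p⟩ u
  tips_no_overlap_q : ∀ g ∈ G, ∀ u : PathsIn V, IsTip PA O g u →
    ¬ PathsIn.OverlapsLeftWith u ⟨vb, yq, q⟩
  tips_no_divide : ∀ g ∈ G, ∀ u : PathsIn V, IsTip PA O g u →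
    ¬ u.Divides ⟨xp, va, p⟩ ∧ ¬ u.Divides ⟨vb, yq, q⟩

end Groebner

section Reduced

variable {k : Type} [Field k] {V : Type} [Quiver.{0} V] [Fintype V]
  {A : Type} [Ring A] [Algebra k A]

/-- `tip(I)`: the set of paths occurring as the tip of a (non-zero) element of `I`. -/
def tipSet (PA : IsPathAlgebra k V A) (O : AdmissibleOrder V) (I : Set A) :
    Set (PathsIn V) :=
  {u | ∃ z ∈ I, IsTip PA O z u}

/-- `n` is the normal form `N(z)` of `z` modulo `I`: `n` is a linear combination of paths
in `ntip(I)` and `z - n ∈ I`. -/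
def IsNormalForm (PA : IsPathAlgebra k V A) (O : AdmissibleOrder V) (I : Set A)
    (z n : A) : Prop :=
  (∀ u : PathsIn V, PA.OccursIn u n → u ∉ tipSet PA O I) ∧ z - n ∈ I

/-- The unique minimal subset `T` of `tip(I)` generating the same (monomial) ideal of `kQ`
as `tip(I)`: the tips none of whose proper subpaths lie in that ideal. -/
def minTips (PA : IsPathAlgebra k V A) (O : AdmissibleOrder V) (I : Set A) :
    Set (PathsIn V) :=
  {u | u ∈ tipSet PA O I ∧ ∀ u' : PathsIn V, u'.ProperlyDivides u →
    PA.basis u' ∉ ringIdealSpan (PA.basis '' tipSet PA O I)}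

/-- The reduced Gröbner basis of `I`: `{t - N(t) : t ∈ T}` where `T = minTips`. -/
def reducedGB (PA : IsPathAlgebra k V A) (O : AdmissibleOrder V) (I : Set A) : Set A :=
  {x | ∃ u ∈ minTips PA O I, ∃ n : A,
    IsNormalForm PA O I (PA.basis u) n ∧ x = PA.basis u - n}

end Reduced

/-! ### Auxiliary path combinatorics -/

namespace PathsIn
variable {V : Type} [Quiver.{0} V]

lemma mk3_eq {a d : V} {p q : Quiver.Path a d} (h : p = q) :
    (⟨a,d,p⟩ : PathsIn V) = ⟨a,d,q⟩ := by rw [h]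

lemma eq_of_mk3_eq {a d : V} {p q : Quiver.Path a d}
    (h : (⟨a,d,p⟩ : PathsIn V) = ⟨a,d,q⟩) : p = q := by simpa using h

lemma eq_elim {a c a' c' : V} {p : Quiver.Path a c} {q : Quiver.Path a' c'}
    (h : (⟨a,c,p⟩:PathsIn V) = ⟨a',c',q⟩) : ∃ (_ : a = a') (_ : c = c'), HEq p q := by
  cases h; exact ⟨rfl, rfl, HEq.rfl⟩

lemma divides_refl (u : PathsIn V) : u.Divides u :=
  ⟨u.1, u.2.1, Quiver.Path.nil, Quiver.Path.nil, by simp⟩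

lemma Divides.trans {u w x : PathsIn V} (h1 : u.Divides w) (h2 : w.Divides x) : u.Divides x := by
  obtain ⟨a, d, r, s, rfl⟩ := h1
  obtain ⟨a', d', r', s', rfl⟩ := h2
  exact ⟨a', d', r'.comp r, s.comp s', mk3_eq (by simp [Quiver.Path.comp_assoc])⟩

lemma Divides.len_le {u w : PathsIn V} (h : u.Divides w) : u.len ≤ w.len := by
  obtain ⟨a, d, r, s, rfl⟩ := h
  simp [len, Quiver.Path.length_comp]; omega

lemma Divides.eq_of_len_ge {u w : PathsIn V} (h : u.Divides w) (hl : w.len ≤ u.len) : u = w := by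
  obtain ⟨ua, ud, up⟩ := u
  obtain ⟨a, d, r, s, rfl⟩ := h
  simp only [len, Quiver.Path.length_comp] at hl
  have hr : r.length = 0 := by omega
  have hs : s.length = 0 := by omega
  obtain rfl := Quiver.Path.eq_of_length_zero r hr
  obtain rfl := Quiver.Path.eq_nil_of_length_zero r hr
  obtain rfl := (Quiver.Path.eq_of_length_zero s hs).symm
  obtain rfl := Quiver.Path.eq_nil_of_length_zero s hs
  simp

lemma ProperlyDivides.len_lt {u w : PathsIn V} (h : u.ProperlyDivides w) : u.len < w.len := by
  rcases Nat.lt_or_ge u.len w.len with h' | h'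
  · exact h'
  · exact absurd (h.1.eq_of_len_ge h') h.2

end PathsIn

theorem path_split {V : Type} [Quiver.{0} V] :
    ∀ {a b c d : V} (x : Quiver.Path a b) (y : Quiver.Path b d)
      (r : Quiver.Path a c) (s : Quiver.Path c d),
    x.comp y = r.comp s → s.length ≤ y.length → ∃ t : Quiver.Path b c, y = t.comp s ∧ r = x.comp t
  | _, _, _, _, _, y, _, Quiver.Path.nil, h, _ => ⟨y, (y.comp_nil).symm, by simpa using h.symm⟩
  | _, _, _, _, _, Quiver.Path.nil, _, Quiver.Path.cons _ _, _, hl => by simp at hl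
  | a, b, c, _, x, Quiver.Path.cons y' f, r, Quiver.Path.cons s' e, h, hl => by
    rw [Quiver.Path.comp_cons, Quiver.Path.comp_cons] at h
    obtain rfl := Quiver.Path.obj_eq_of_cons_eq_cons h
    obtain rfl : f = e := eq_of_heq (Quiver.Path.hom_heq_of_cons_eq_cons h)
    have h' := Quiver.Path.heq_of_cons_eq_cons h
    obtain ⟨t, ht1, ht2⟩ := path_split x y' r s' (eq_of_heq h') (by simpa using hl)
    exact ⟨t, by rw [ht1, Quiver.Path.comp_cons], ht2⟩

section PathComb
variable {V : Type} [Quiver.{0} V] {va vb : V} {α : va ⟶ vb}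
open Quiver

lemma arrow_divides_comp {a b c : V} {x : Path a b} {y : Path b c}
    (h : (arrowPath α).Divides ⟨a, c, x.comp y⟩) :
    (arrowPath α).Divides ⟨a, b, x⟩ ∨ (arrowPath α).Divides ⟨b, c, y⟩ := by
  dsimp only [PathsIn.Divides, arrowPath] at h
  obtain ⟨a', d', r, s, hEq⟩ := h
  obtain ⟨rfl, rfl, hp⟩ := PathsIn.eq_elim hEq
  have hw : x.comp y = (r.comp α.toPath).comp s := eq_of_heq hp
  have hlen := congrArg Path.length hw
  simp [Path.length_comp, Hom.toPath] at hlen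
  rcases le_or_gt y.length s.length with hl | hl
  · obtain ⟨t, ht1, ht2⟩ := path_split (r.comp α.toPath) s x y hw.symm hl
    exact Or.inl ⟨a, b, r, t, PathsIn.mk3_eq ht2⟩
  · have hw' : x.comp y = r.comp (α.toPath.comp s) := by rw [hw, Path.comp_assoc]
    have hl' : (α.toPath.comp s).length ≤ y.length := by
      simp [Path.length_comp, Hom.toPath]; omega
    obtain ⟨t, ht1, ht2⟩ := path_split x y r (α.toPath.comp s) hw' hl'
    refine Or.inr ⟨b, c, t, s, PathsIn.mk3_eq ?_⟩
    show y = (t.comp α.toPath).comp s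
    rw [ht1, Path.comp_assoc]

lemma avoids_comp {a b c : V} {x : Path a b} {y : Path b c}
    (hx : AvoidsArrow α (⟨a, b, x⟩ : PathsIn V)) (hy : AvoidsArrow α (⟨b, c, y⟩ : PathsIn V)) :
    AvoidsArrow α (⟨a, c, x.comp y⟩ : PathsIn V) := fun h => by
  rcases arrow_divides_comp h with h | h
  · exact hx h
  · exact hy h

lemma divides_pathPAQ {xp yq : V} {p : Path xp va} {q : Path vb yq} {u : PathsIn V}
    (h : u.Divides (pathPAQ α p q)) :
    (arrowPath α).Divides u ∨ u.Divides ⟨xp, va, p⟩ ∨ u.Divides ⟨vb, yq, q⟩ := by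
  obtain ⟨ua, ub, up⟩ := u
  obtain ⟨a', d', r, s, hEq⟩ := h
  obtain ⟨rfl, rfl, hp⟩ := PathsIn.eq_elim hEq
  have hw : (p.comp α.toPath).comp q = (r.comp up).comp s := eq_of_heq hp
  have hlen := congrArg Path.length hw
  simp [Path.length_comp, Hom.toPath] at hlen
  rcases le_or_gt (q.length + 1) s.length with hl | hl
  · have hw' : (r.comp up).comp s = p.comp (α.toPath.comp q) := by rw [← hw, Path.comp_assoc]
    have hc : (α.toPath.comp q).length ≤ s.length := by
      simp [Path.length_comp, Hom.toPath]; omega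
    obtain ⟨t, ht1, ht2⟩ := path_split (r.comp up) s p (α.toPath.comp q) hw' hc
    exact Or.inr (Or.inl ⟨xp, va, r, t, PathsIn.mk3_eq ht2⟩)
  · rcases le_or_gt r.length p.length with hl2 | hl2
    · obtain ⟨t, ht1, ht2⟩ := path_split (p.comp α.toPath) q (r.comp up) s hw (by omega)
      have hw2 : r.comp up = p.comp (α.toPath.comp t) := by rw [ht2, Path.comp_assoc]
      have hc2 : (α.toPath.comp t).length ≤ up.length := by
        have := congrArg Path.length ht1
        simp [Path.length_comp, Hom.toPath] at this ⊢
        omega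
      obtain ⟨t₂, ht3, ht4⟩ := path_split r up p (α.toPath.comp t) hw2 hc2
      refine Or.inl ⟨ua, ub, t₂, t, PathsIn.mk3_eq ?_⟩
      show up = (t₂.comp α.toPath).comp t
      rw [ht3, Path.comp_assoc]
    · have hw'' : (p.comp α.toPath).comp q = r.comp (up.comp s) := by rw [hw, Path.comp_assoc]
      have hc : (up.comp s).length ≤ q.length := by simp [Path.length_comp]; omega
      obtain ⟨t, ht1, ht2⟩ := path_split (p.comp α.toPath) q r (up.comp s) hw'' hc
      refine Or.inr (Or.inr ⟨vb, yq, t, s, PathsIn.mk3_eq ?_⟩)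
      rw [ht1, ← Path.comp_assoc]

lemma comp_toPath_eq_cons {a b c : V} (p : Path a b) (e : b ⟶ c) :
    p.comp e.toPath = p.cons e := by
  simp [Hom.toPath]

lemma pathPAQ_inj_aux {xp yq xp' yq' : V} {p : Path xp va} {q : Path vb yq}
    {p' : Path xp' va} {q' : Path vb yq'}
    (hq' : AvoidsArrow α (⟨vb, yq', q'⟩ : PathsIn V))
    (h : pathPAQ α p q = pathPAQ α p' q') (hle : q.length ≤ q'.length) :
    (⟨xp, va, p⟩ : PathsIn V) = ⟨xp', va, p'⟩ ∧ (⟨vb, yq, q⟩ : PathsIn V) = ⟨vb, yq', q'⟩ := by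
  obtain ⟨rfl, rfl, hp⟩ := PathsIn.eq_elim h
  have hw : (p'.comp α.toPath).comp q' = (p.comp α.toPath).comp q := (eq_of_heq hp).symm
  obtain ⟨t, ht1, ht2⟩ := path_split (p'.comp α.toPath) q' (p.comp α.toPath) q hw hle
  cases t with
  | nil =>
    rw [Path.nil_comp] at ht1
    rw [Path.comp_nil] at ht2
    rw [comp_toPath_eq_cons, comp_toPath_eq_cons] at ht2
    obtain rfl : p = p' := eq_of_heq (Path.heq_of_cons_eq_cons ht2)
    exact ⟨rfl, by rw [ht1]⟩
  | cons t' e =>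
    exfalso
    rw [comp_toPath_eq_cons] at ht2
    rw [Path.comp_cons] at ht2
    obtain rfl := Path.obj_eq_of_cons_eq_cons ht2
    obtain rfl : α = e := eq_of_heq (Path.hom_heq_of_cons_eq_cons ht2)
    refine hq' ⟨vb, yq, t', q, PathsIn.mk3_eq ?_⟩
    show q' = (t'.comp α.toPath).comp q
    rw [ht1, comp_toPath_eq_cons]

lemma pathPAQ_inj {xp yq xp' yq' : V} {p : Path xp va} {q : Path vb yq}
    {p' : Path xp' va} {q' : Path vb yq'}
    (hq : AvoidsArrow α (⟨vb, yq, q⟩ : PathsIn V))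
    (hq' : AvoidsArrow α (⟨vb, yq', q'⟩ : PathsIn V))
    (h : pathPAQ α p q = pathPAQ α p' q') :
    (⟨xp, va, p⟩ : PathsIn V) = ⟨xp', va, p'⟩ ∧ (⟨vb, yq, q⟩ : PathsIn V) = ⟨vb, yq', q'⟩ := by
  rcases Nat.le_total q.length q'.length with hle | hle
  · exact pathPAQ_inj_aux hq' h hle
  · obtain ⟨h1, h2⟩ := pathPAQ_inj_aux hq h.symm hle
    exact ⟨h1.symm, h2.symm⟩

end PathComb

/-! ### Auxiliary algebra lemmas -/

section AlgAux
variable {k : Type} [Field k] {V : Type} [Quiver.{0} V] [Fintype V]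
  {A : Type} [Ring A] [Algebra k A]

namespace IsPathAlgebra
variable (PA : IsPathAlgebra k V A)

lemma exists_basis_apply_ne_zero (L : A →ₗ[k] k) (z : A) (h : L z ≠ 0) :
    ∃ w, PA.basis.repr z w ≠ 0 ∧ L (PA.basis w) ≠ 0 := by
  by_contra hc
  push_neg at hc
  apply h
  conv_lhs => rw [← PA.basis.linearCombination_repr z]
  rw [Finsupp.linearCombination_apply, map_finsuppSum]
  apply Finset.sum_eq_zero
  intro w hw
  rcases eq_or_ne (PA.basis.repr z w) 0 with h0 | h0
  · simp [h0]
  · simp [map_smul, hc w h0]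

lemma basis_triple {e f g h : V} (a : Quiver.Path e f) (b : Quiver.Path g h)
    (w u : PathsIn V)
    (hne : PA.basis.repr (PA.basis ⟨e,f,a⟩ * PA.basis w * PA.basis ⟨g,h,b⟩) u ≠ 0) :
    ∃ v : Quiver.Path f g, w = ⟨f,g,v⟩ ∧ u = ⟨e,h,(a.comp v).comp b⟩ := by
  classical
  obtain ⟨f', g', w'⟩ := w
  by_cases hf : f = f'
  · subst hf
    by_cases hg : g' = g
    · subst hg
      rw [PA.mul_matched, PA.mul_matched, PA.basis.repr_self, Finsupp.single_apply] at hne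
      split_ifs at hne with h1
      · exact ⟨w', rfl, h1.symm⟩
      · exact absurd rfl hne
    · rw [PA.mul_matched, PA.mul_unmatched _ _ hg] at hne
      simp at hne
  · rw [PA.mul_unmatched _ _ hf, zero_mul] at hne
    simp at hne

lemma occurs_sandwich {e f g h : V} (a : Quiver.Path e f) (b : Quiver.Path g h) (z : A)
    (u : PathsIn V)
    (hne : PA.OccursIn u (PA.basis ⟨e,f,a⟩ * z * PA.basis ⟨g,h,b⟩)) :
    ∃ v : Quiver.Path f g, PA.OccursIn (⟨f,g,v⟩ : PathsIn V) z ∧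
      u = ⟨e,h,(a.comp v).comp b⟩ := by
  classical
  set L : A →ₗ[k] k :=
    (Finsupp.lapply u) ∘ₗ (PA.basis.repr : A →ₗ[k] (PathsIn V →₀ k)) ∘ₗ
      (LinearMap.mulRight k (PA.basis ⟨g,h,b⟩)) ∘ₗ (LinearMap.mulLeft k (PA.basis ⟨e,f,a⟩))
    with hL
  have hLz : L z ≠ 0 := by
    simpa [hL, LinearMap.mulRight_apply, LinearMap.mulLeft_apply, IsPathAlgebra.OccursIn] using hne
  obtain ⟨w, hw1, hw2⟩ := PA.exists_basis_apply_ne_zero L z hLz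
  have hw2' : PA.basis.repr (PA.basis ⟨e,f,a⟩ * PA.basis w * PA.basis ⟨g,h,b⟩) u ≠ 0 := by
    simpa [hL, LinearMap.mulRight_apply, LinearMap.mulLeft_apply] using hw2
  obtain ⟨v, rfl, hu⟩ := PA.basis_triple a b _ u hw2'
  exact ⟨v, hw1, hu⟩

lemma repr_sandwich {e f g hh : V} (a : Quiver.Path e f) (b : Quiver.Path g hh) (z : A)
    (v : Quiver.Path f g) :
    PA.basis.repr (PA.basis ⟨e,f,a⟩ * z * PA.basis ⟨g,hh,b⟩) ⟨e,hh,(a.comp v).comp b⟩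
      = PA.basis.repr z ⟨f,g,v⟩ := by
  classical
  set L : A →ₗ[k] k :=
    (Finsupp.lapply (⟨e,hh,(a.comp v).comp b⟩ : PathsIn V)) ∘ₗ
      (PA.basis.repr : A →ₗ[k] (PathsIn V →₀ k)) ∘ₗ
      (LinearMap.mulRight k (PA.basis ⟨g,hh,b⟩)) ∘ₗ (LinearMap.mulLeft k (PA.basis ⟨e,f,a⟩))
    with hLdef
  set R : A →ₗ[k] k :=
    (Finsupp.lapply (⟨f,g,v⟩ : PathsIn V)) ∘ₗ (PA.basis.repr : A →ₗ[k] (PathsIn V →₀ k))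
    with hRdef
  have hLR : L = R := by
    apply PA.basis.ext
    rintro ⟨f', g', w⟩
    show PA.basis.repr (PA.basis ⟨e,f,a⟩ * PA.basis ⟨f',g',w⟩ * PA.basis ⟨g,hh,b⟩)
        ⟨e,hh,(a.comp v).comp b⟩ = PA.basis.repr (PA.basis ⟨f',g',w⟩) ⟨f,g,v⟩
    by_cases hf : f = f'
    · subst hf
      by_cases hg : g' = g
      · subst hg
        rw [PA.mul_matched, PA.mul_matched, PA.basis.repr_self, PA.basis.repr_self,
          Finsupp.single_apply, Finsupp.single_apply]
        by_cases hw : w = v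
        · subst hw; rw [if_pos rfl, if_pos rfl]
        · rw [if_neg, if_neg]
          · exact fun hEq => hw (PathsIn.eq_of_mk3_eq hEq)
          · intro hEq
            apply hw
            have := PathsIn.eq_of_mk3_eq hEq
            exact Quiver.Path.comp_injective_right a
              (Quiver.Path.comp_injective_left b this)
      · rw [PA.mul_matched, PA.mul_unmatched _ _ hg, PA.basis.repr_self, Finsupp.single_apply]
        rw [if_neg fun hEq => hg (PathsIn.eq_elim hEq).2.1]
        simp
    · rw [PA.mul_unmatched _ _ hf, zero_mul, PA.basis.repr_self, Finsupp.single_apply]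
      rw [if_neg fun hEq => hf (PathsIn.eq_elim hEq).1.symm]
      simp
  have := DFunLike.congr_fun hLR z
  simpa [hLdef, hRdef, LinearMap.mulRight_apply, LinearMap.mulLeft_apply] using this

end IsPathAlgebra
end AlgAux

section SpanAux
variable {k : Type} [Field k] {V : Type} [Quiver.{0} V] [Fintype V]
  {A : Type} [Ring A] [Algebra k A]

lemma mem_ringIdealSpan_of {T : Set A} {t : A} (ht : t ∈ T) (r s : A) :
    r * t * s ∈ ringIdealSpan T :=
  AddSubgroup.subset_closure ⟨r, s, t, ht, rfl⟩

lemma self_mem_ringIdealSpan {T : Set A} {t : A} (ht : t ∈ T) : t ∈ ringIdealSpan T := by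
  have := mem_ringIdealSpan_of ht 1 1
  simpa using this

lemma occurs_ringIdealSpan (PA : IsPathAlgebra k V A) {T : Set A} {z : A}
    (hz : z ∈ ringIdealSpan T) :
    ∀ u, PA.OccursIn u z → ∃ t ∈ T, ∃ v, PA.OccursIn v t ∧ v.Divides u := by
  classical
  have hz' : z ∈ AddSubgroup.closure {y : A | ∃ r s : A, ∃ t ∈ T, y = r * t * s} := hz
  refine AddSubgroup.closure_induction
    (p := fun z _ => ∀ u, PA.OccursIn u z → ∃ t ∈ T, ∃ v, PA.OccursIn v t ∧ v.Divides u)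
    ?_ ?_ ?_ ?_ hz'
  · rintro x ⟨r, s, t, ht, rfl⟩ u hu
    set L₁ : A →ₗ[k] k := (Finsupp.lapply u) ∘ₗ
      (PA.basis.repr : A →ₗ[k] (PathsIn V →₀ k)) ∘ₗ LinearMap.mulRight k (t * s) with hL₁
    have h1 : L₁ r ≠ 0 := by
      simpa [hL₁, LinearMap.mulRight_apply, mul_assoc, IsPathAlgebra.OccursIn] using hu
    obtain ⟨w₁, hw₁, h2⟩ := PA.exists_basis_apply_ne_zero L₁ r h1
    set L₂ : A →ₗ[k] k := (Finsupp.lapply u) ∘ₗ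
      (PA.basis.repr : A →ₗ[k] (PathsIn V →₀ k)) ∘ₗ
        LinearMap.mulLeft k (PA.basis w₁ * t) with hL₂
    have h3 : L₂ s ≠ 0 := by
      simpa [hL₂, hL₁, LinearMap.mulRight_apply, LinearMap.mulLeft_apply, mul_assoc] using h2
    obtain ⟨w₂, hw₂, h4⟩ := PA.exists_basis_apply_ne_zero L₂ s h3
    obtain ⟨e, f, a⟩ := w₁
    obtain ⟨g, hh, b⟩ := w₂
    have h5 : PA.OccursIn u (PA.basis ⟨e,f,a⟩ * t * PA.basis ⟨g,hh,b⟩) := by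
      simpa only [hL₂, IsPathAlgebra.OccursIn, LinearMap.coe_comp, Function.comp_apply,
        LinearMap.mulLeft_apply, Finsupp.lapply_apply, LinearEquiv.coe_coe] using h4
    obtain ⟨v, hv, rfl⟩ := PA.occurs_sandwich a b t u h5
    exact ⟨t, ht, ⟨f,g,v⟩, hv, ⟨e, hh, a, b, rfl⟩⟩
  · intro u hu
    simp [IsPathAlgebra.OccursIn] at hu
  · rintro x y hx hy ihx ihy u hu
    have hu' : PA.basis.repr x u + PA.basis.repr y u ≠ 0 := by
      simpa [IsPathAlgebra.OccursIn] using hu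
    rcases eq_or_ne (PA.basis.repr x u) 0 with h0 | h0
    · exact ihy u (by simpa [h0, IsPathAlgebra.OccursIn] using hu')
    · exact ihx u h0
  · rintro x hx ih u hu
    refine ih u fun h0 => hu ?_
    simp [IsPathAlgebra.OccursIn, h0]

end SpanAux

section TipAux
variable {k : Type} [Field k] {V : Type} [Quiver.{0} V] [Fintype V]
  {A : Type} [Ring A] [Algebra k A]

lemma finset_exists_max (O : AdmissibleOrder V) :
    ∀ s : Finset (PathsIn V), s.Nonempty → ∃ u ∈ s, ∀ v ∈ s, O.le v u := by
  intro s
  classical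
  induction s using Finset.induction_on with
  | empty => intro h; exact absurd h (by simp)
  | @insert a s ha ih =>
    intro _
    rcases s.eq_empty_or_nonempty with rfl | hne
    · refine ⟨a, Finset.mem_insert_self _ _, ?_⟩
      intro v hv
      simp only [Finset.mem_insert, Finset.notMem_empty, or_false] at hv
      subst hv
      exact O.refl _
    · obtain ⟨u, hu, hmax⟩ := ih hne
      rcases O.total a u with h1 | h1
      · refine ⟨u, Finset.mem_insert_of_mem hu, ?_⟩
        intro v hv
        rcases Finset.mem_insert.1 hv with rfl | hv
        · exact h1
        · exact hmax v hv
      · refine ⟨a, Finset.mem_insert_self _ _, ?_⟩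
        intro v hv
        rcases Finset.mem_insert.1 hv with rfl | hv
        · exact O.refl _
        · exact O.trans _ _ _ (hmax v hv) h1

namespace IsPathAlgebra
variable (PA : IsPathAlgebra k V A)

lemma occurs_basis {u w : PathsIn V} (h : PA.OccursIn w (PA.basis u)) : w = u := by
  classical
  rw [OccursIn, PA.basis.repr_self, Finsupp.single_apply] at h
  split_ifs at h with h1
  · exact h1.symm
  · exact absurd rfl h

lemma ne_zero_of_occurs {u : PathsIn V} {z : A} (h : PA.OccursIn u z) : z ≠ 0 := by
  rintro rfl
  simp [OccursIn] at h

lemma exists_occurs {z : A} (hz : z ≠ 0) : ∃ u, PA.OccursIn u z := by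
  by_contra hc
  push_neg at hc
  apply hz
  have h0 : PA.basis.repr z = 0 := by
    ext u
    simpa using not_not.1 (hc u)
  simpa using (LinearEquiv.map_eq_zero_iff PA.basis.repr).1 h0

lemma isTip_basis (O : AdmissibleOrder V) (u : PathsIn V) : IsTip PA O (PA.basis u) u := by
  refine ⟨?_, ?_⟩
  · rw [OccursIn, PA.basis.repr_self]
    simp
  · intro w hw
    obtain rfl := PA.occurs_basis hw
    exact O.refl _

lemma exists_isTip (O : AdmissibleOrder V) {z : A} (hz : z ≠ 0) : ∃ u, IsTip PA O z u := by
  have hs : (PA.basis.repr z).support.Nonempty := by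
    rw [Finsupp.support_nonempty_iff]
    intro h0
    exact hz (by simpa using (LinearEquiv.map_eq_zero_iff PA.basis.repr).1 h0)
  obtain ⟨u, hu, hmax⟩ := finset_exists_max O _ hs
  exact ⟨u, Finsupp.mem_support_iff.1 hu, fun w hw => hmax w (Finsupp.mem_support_iff.2 hw)⟩

lemma isTip_unique {O : AdmissibleOrder V} {z : A} {u u' : PathsIn V}
    (h1 : IsTip PA O z u) (h2 : IsTip PA O z u') : u = u' :=
  O.antisymm _ _ (h2.2 u h1.1) (h1.2 u' h2.1)

end IsPathAlgebra

section Ideal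
variable {PA : IsPathAlgebra k V A} {I : Set A}

lemma adm_zero (hI1 : I = ringIdealSpan I) : (0:A) ∈ I := by
  rw [hI1]
  exact AddSubgroup.zero_mem _

lemma adm_sub (hI1 : I = ringIdealSpan I) {x y : A} (hx : x ∈ I) (hy : y ∈ I) : x - y ∈ I := by
  rw [hI1] at hx hy ⊢
  exact AddSubgroup.sub_mem _ hx hy

lemma adm_add (hI1 : I = ringIdealSpan I) {x y : A} (hx : x ∈ I) (hy : y ∈ I) : x + y ∈ I := by
  rw [hI1] at hx hy ⊢
  exact AddSubgroup.add_mem _ hx hy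

lemma adm_mul (hI1 : I = ringIdealSpan I) {x : A} (hx : x ∈ I) (r s : A) : r * x * s ∈ I := by
  have h2 := mem_ringIdealSpan_of hx r s
  rwa [← hI1] at h2

lemma adm_smul (hI1 : I = ringIdealSpan I) {x : A} (c : k) (hx : x ∈ I) : c • x ∈ I := by
  have := adm_mul hI1 hx (algebraMap k A c) 1
  rwa [mul_one, ← Algebra.smul_def] at this

end Ideal
end TipAux

section GBAux
variable {k : Type} [Field k] {V : Type} [Quiver.{0} V] [Fintype V]
  {A : Type} [Ring A] [Algebra k A]
variable {PA : IsPathAlgebra k V A} {O : AdmissibleOrder V} {I G : Set A}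
variable {va vb xp yq : V} {α : va ⟶ vb} {p : Quiver.Path xp va} {q : Quiver.Path vb yq}

lemma le_mul_compat (O : AdmissibleOrder V) {f g : V} {v w : Quiver.Path f g}
    (h : O.le ⟨f,g,v⟩ ⟨f,g,w⟩) {a0 d0 : V} (r : Quiver.Path a0 f) (s : Quiver.Path g d0) :
    O.le ⟨a0,d0,(r.comp v).comp s⟩ ⟨a0,d0,(r.comp w).comp s⟩ := by
  have h1 := O.right_compat ⟨f,g,v⟩ ⟨f,g,w⟩ h rfl d0 s
  simp only [Quiver.Path.cast_rfl_rfl] at h1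
  have h2 := O.left_compat ⟨f,d0,v.comp s⟩ ⟨f,d0,w.comp s⟩ h1 rfl a0 r
  simp only [Quiver.Path.cast_rfl_rfl] at h2
  have e1 : (⟨a0,d0,(r.comp v).comp s⟩ : PathsIn V) = ⟨a0,d0,r.comp (v.comp s)⟩ :=
    PathsIn.mk3_eq (Quiver.Path.comp_assoc r v s)
  have e2 : (⟨a0,d0,(r.comp w).comp s⟩ : PathsIn V) = ⟨a0,d0,r.comp (w.comp s)⟩ :=
    PathsIn.mk3_eq (Quiver.Path.comp_assoc r w s)
  rw [e1, e2]
  exact h2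

lemma tipSet_mem {z : A} (hz : z ∈ I) {u : PathsIn V} (h : IsTip PA O z u) :
    u ∈ tipSet PA O I := ⟨z, hz, h⟩

lemma exists_G_tip_dvd (hGB : IsGroebnerBasis PA O I G) {u : PathsIn V}
    (hu : u ∈ tipSet PA O I) : ∃ g ∈ G, ∃ tg, IsTip PA O g tg ∧ tg.Divides u := by
  obtain ⟨z, hzI, hzt⟩ := hu
  obtain ⟨g, hg, tg, tz, htg, htz, hdvd⟩ := hGB.2 z hzI (PA.ne_zero_of_occurs hzt.1)
  obtain rfl := PA.isTip_unique htz hzt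
  exact ⟨g, hg, tg, htg, hdvd⟩

lemma tipSet_not_divide_pq (hG : IsStrictMonomialGB PA O α I G p q) {u : PathsIn V}
    (hu : u ∈ tipSet PA O I) :
    ¬ u.Divides ⟨xp,va,p⟩ ∧ ¬ u.Divides ⟨vb,yq,q⟩ := by
  obtain ⟨g, hg, tg, htg, hdvd⟩ := exists_G_tip_dvd hG.gb hu
  constructor
  · exact fun h => (hG.tips_no_divide g hg tg htg).1 (hdvd.trans h)
  · exact fun h => (hG.tips_no_divide g hg tg htg).2 (hdvd.trans h)

lemma arrow_divides_pathPAQ : (arrowPath α).Divides (pathPAQ α p q) :=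
  ⟨xp, yq, p, q, rfl⟩

lemma tip_of_G_cases (hG : IsStrictMonomialGB PA O α I G p q) {g : A} (hg : g ∈ G)
    {tg : PathsIn V} (htg : IsTip PA O g tg) (hd : tg.Divides (pathPAQ α p q)) :
    g = PA.basis (pathPAQ α p q) ∧ tg = pathPAQ α p q := by
  rcases divides_pathPAQ hd with h | h | h
  · by_cases hgeq : g = PA.basis (pathPAQ α p q)
    · subst hgeq
      have := PA.isTip_unique htg (PA.isTip_basis O (pathPAQ α p q))
      exact ⟨rfl, this⟩
    · exact absurd h (hG.others_avoid g hg hgeq tg htg.1)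
  · exact absurd h (hG.tips_no_divide g hg tg htg).1
  · exact absurd h (hG.tips_no_divide g hg tg htg).2

lemma pathPAQ_mem_minTips (hG : IsStrictMonomialGB PA O α I G p q) :
    pathPAQ α p q ∈ minTips PA O I := by
  constructor
  · exact ⟨PA.basis (pathPAQ α p q), hG.gb.1 hG.mem, PA.isTip_basis O _⟩
  · intro t' ht' hmem
    obtain ⟨tt, htt, v, hv, hdvd⟩ :=
      occurs_ringIdealSpan PA hmem t' (PA.isTip_basis O t').1
    obtain ⟨w, hw, rfl⟩ := htt
    obtain rfl := PA.occurs_basis hv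
    obtain ⟨g, hg, tg, htg, hdvd2⟩ := exists_G_tip_dvd hG.gb hw
    have hdvd3 : tg.Divides (pathPAQ α p q) := (hdvd2.trans hdvd).trans ht'.1
    obtain ⟨hgeq, rfl⟩ := tip_of_G_cases hG hg htg hdvd3
    have h1 := ((hdvd2.trans hdvd)).len_le
    have h2 := ht'.len_lt
    omega

lemma minTips_isTip_G (hG : IsStrictMonomialGB PA O α I G p q) {t : PathsIn V}
    (ht : t ∈ minTips PA O I) : ∃ g ∈ G, IsTip PA O g t := by
  obtain ⟨g, hg, tg, htg, hdvd⟩ := exists_G_tip_dvd hG.gb ht.1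
  have htgM : PA.basis tg ∈ ringIdealSpan (PA.basis '' tipSet PA O I) :=
    self_mem_ringIdealSpan ⟨tg, tipSet_mem (hG.gb.1 hg) htg, rfl⟩
  rcases eq_or_ne tg t with rfl | hne
  · exact ⟨g, hg, htg⟩
  · exact absurd htgM (ht.2 tg ⟨hdvd, hne⟩)

lemma exists_minTips_dvd (hGB : IsGroebnerBasis PA O I G) {u : PathsIn V}
    (hu : u ∈ tipSet PA O I) : ∃ t ∈ minTips PA O I, t.Divides u := by
  classical
  set M := ringIdealSpan (PA.basis '' tipSet PA O I) with hM
  have hS : ∃ n, ∃ v : PathsIn V, v.Divides u ∧ PA.basis v ∈ M ∧ v.len = n :=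
    ⟨u.len, u, PathsIn.divides_refl u, self_mem_ringIdealSpan ⟨u, hu, rfl⟩, rfl⟩
  obtain ⟨v, hvu, hvM, hvlen⟩ := Nat.find_spec hS
  have hvtip : v ∈ tipSet PA O I := by
    obtain ⟨tt, htt, v', hv', hdvd⟩ := occurs_ringIdealSpan PA hvM v (PA.isTip_basis O v).1
    obtain ⟨w, hw, rfl⟩ := htt
    have hvw : v' = w := PA.occurs_basis hv'
    rw [hvw] at hdvd
    have hfind : Nat.find hS ≤ w.len :=
      Nat.find_le ⟨w, hdvd.trans hvu, self_mem_ringIdealSpan ⟨w, hw, rfl⟩, rfl⟩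
    have hwv : w = v := hdvd.eq_of_len_ge (by omega)
    rwa [← hwv]
  refine ⟨v, ⟨hvtip, ?_⟩, hvu⟩
  intro t' hpd hmem
  have hlt := hpd.len_lt
  exact Nat.find_min hS (m := t'.len) (by omega) ⟨t', hpd.1.trans hvu, hmem, rfl⟩

lemma nf_unique (hI1 : I = ringIdealSpan I) {z n1 n2 : A}
    (h1 : IsNormalForm PA O I z n1) (h2 : IsNormalForm PA O I z n2) : n1 = n2 := by
  by_contra hne
  have hsub : n1 - n2 ∈ I := by
    have : n1 - n2 = (z - n2) - (z - n1) := by abel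
    rw [this]
    exact adm_sub hI1 h2.2 h1.2
  have hne' : n1 - n2 ≠ 0 := sub_ne_zero.2 hne
  obtain ⟨u, hu⟩ := PA.exists_isTip O hne'
  have humem : u ∈ tipSet PA O I := tipSet_mem hsub hu
  have hocc : PA.OccursIn u n1 ∨ PA.OccursIn u n2 := by
    by_contra hc
    push_neg at hc
    have h0 : PA.basis.repr n1 u = 0 := not_not.1 hc.1
    have h0' : PA.basis.repr n2 u = 0 := not_not.1 hc.2
    exact hu.1 (by simp [IsPathAlgebra.OccursIn, h0, h0'])
  rcases hocc with h | h
  · exact h1.1 u h humem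
  · exact h2.1 u h humem

end GBAux

section NFExists
variable {k : Type} [Field k] {V : Type} [Quiver.{0} V] [Fintype V]
  {A : Type} [Ring A] [Algebra k A]
variable {PA : IsPathAlgebra k V A} {O : AdmissibleOrder V} {I G : Set A}
variable {va vb xp yq : V} {α : va ⟶ vb} {p : Quiver.Path xp va} {q : Quiver.Path vb yq}

lemma nf_exists (hI : IsAdmissibleIdeal PA I) (hG : IsStrictMonomialGB PA O α I G p q) :
    ∀ z : A, ∃ n, IsNormalForm PA O I z n ∧ (PA.ElemAvoids α z → PA.ElemAvoids α n) := by
  classical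
  have hI1 := hI.1
  suffices H : ∀ w : PathsIn V, ∀ z : A, IsTip PA O z w →
      ∃ n, IsNormalForm PA O I z n ∧ (PA.ElemAvoids α z → PA.ElemAvoids α n) by
    intro z
    rcases eq_or_ne z 0 with rfl | hz
    · refine ⟨0, ⟨?_, by simpa using adm_zero hI1⟩, ?_⟩
      · intro u hu; simp [IsPathAlgebra.OccursIn] at hu
      · intro _ u hu; simp [IsPathAlgebra.OccursIn] at hu
    · obtain ⟨w, hw⟩ := PA.exists_isTip O hz
      exact H w z hw
  intro w
  refine O.wf.induction (C := fun w => ∀ z : A, IsTip PA O z w →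
    ∃ n, IsNormalForm PA O I z n ∧ (PA.ElemAvoids α z → PA.ElemAvoids α n)) w ?_
  clear w
  intro w ih z hzw
  by_cases hwt : w ∈ tipSet PA O I
  · -- tip case: reduce by a Gröbner basis element
    obtain ⟨g, hg, tg, htg, hdvd⟩ := exists_G_tip_dvd hG.gb hwt
    obtain ⟨tga, tgb, tgp⟩ := tg
    obtain ⟨a0, d0, r, s, hweq⟩ := hdvd
    set c := PA.basis.repr z w with hc
    set d := PA.basis.repr g ⟨tga, tgb, tgp⟩ with hd
    have hd0 : d ≠ 0 := htg.1
    set hh := PA.basis ⟨a0,tga,r⟩ * g * PA.basis ⟨tgb,d0,s⟩ with hhdef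
    have hhI : hh ∈ I := adm_mul hI1 (hG.gb.1 hg) _ _
    have hreprhh : PA.basis.repr hh w = d := by
      rw [hweq, hhdef, hd]
      exact PA.repr_sandwich r s g tgp
    have hhocc : ∀ u, PA.OccursIn u hh →
        ∃ v : Quiver.Path tga tgb, PA.OccursIn (⟨tga,tgb,v⟩ : PathsIn V) g ∧
          u = ⟨a0,d0,(r.comp v).comp s⟩ := fun u hu => PA.occurs_sandwich r s g u hu
    set z' := z - (c / d) • hh with hz'def
    have hreprz' : ∀ u, PA.basis.repr z' u
        = PA.basis.repr z u - (c/d) * PA.basis.repr hh u := by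
      intro u; rw [hz'def]; simp
    have hz'w : PA.basis.repr z' w = 0 := by
      rw [hreprz' w, hreprhh, ← hc, div_mul_cancel₀ _ hd0, sub_self]
    have hz'occ : ∀ u, PA.OccursIn u z' → (O.le u w ∧ u ≠ w) ∧
        (PA.OccursIn u z ∨ PA.OccursIn u hh) := by
      intro u hu
      have hor : PA.OccursIn u z ∨ PA.OccursIn u hh := by
        by_contra hcon
        push_neg at hcon
        have e1 : PA.basis.repr z u = 0 := not_not.1 hcon.1
        have e2 : PA.basis.repr hh u = 0 := not_not.1 hcon.2
        exact hu (by rw [hreprz' u, e1, e2]; simp)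
      have hne : u ≠ w := fun h => hu (by rw [h]; exact hz'w)
      have hle : O.le u w := by
        rcases hor with h | h
        · exact hzw.2 u h
        · obtain ⟨v, hv, rfl⟩ := hhocc u h
          have hvle := htg.2 _ hv
          have hfin := le_mul_compat O hvle r s
          rw [hweq]
          exact hfin
      exact ⟨⟨hle, hne⟩, hor⟩
    have hhavoid : PA.ElemAvoids α z → PA.ElemAvoids α hh := by
      intro hzav
      have hwav : AvoidsArrow α w := hzav w hzw.1
      have hgne : g ≠ PA.basis (pathPAQ α p q) := by
        rintro rfl
        have htip : (⟨tga,tgb,tgp⟩ : PathsIn V) = pathPAQ α p q :=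
          PA.isTip_unique htg (PA.isTip_basis O _)
        apply hwav
        refine PathsIn.Divides.trans (arrow_divides_pathPAQ (α := α) (p := p) (q := q)) ?_
        rw [← htip]
        exact ⟨a0, d0, r, s, hweq⟩
      have hgav : PA.ElemAvoids α g := hG.others_avoid g hg hgne
      have hrav : AvoidsArrow α (⟨a0,tga,r⟩ : PathsIn V) := by
        intro hcon
        apply hwav
        refine hcon.trans ?_
        refine ⟨a0, d0, Quiver.Path.nil, tgp.comp s, ?_⟩
        rw [hweq]
        exact PathsIn.mk3_eq (by rw [Quiver.Path.nil_comp, Quiver.Path.comp_assoc])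
      have hsav : AvoidsArrow α (⟨tgb,d0,s⟩ : PathsIn V) := by
        intro hcon
        apply hwav
        refine hcon.trans ?_
        refine ⟨a0, d0, r.comp tgp, Quiver.Path.nil, ?_⟩
        rw [hweq]
        exact PathsIn.mk3_eq (by rw [Quiver.Path.comp_nil])
      intro u hu
      obtain ⟨v, hv, rfl⟩ := hhocc u hu
      exact avoids_comp (avoids_comp hrav (hgav _ hv)) hsav
    rcases eq_or_ne z' 0 with h0 | h0
    · refine ⟨0, ⟨?_, ?_⟩, ?_⟩
      · intro u hu; simp [IsPathAlgebra.OccursIn] at hu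
      · have hzeq : z = (c/d) • hh := by
          rw [hz'def] at h0
          exact sub_eq_zero.1 h0
        rw [sub_zero, hzeq]
        exact adm_smul hI1 _ hhI
      · intro _ u hu; simp [IsPathAlgebra.OccursIn] at hu
    · obtain ⟨w', hw'⟩ := PA.exists_isTip O h0
      have hlt := (hz'occ w' hw'.1).1
      obtain ⟨n, hn, hnav⟩ := ih w' hlt z' hw'
      refine ⟨n, ⟨hn.1, ?_⟩, ?_⟩
      · have heq : z - n = (c/d) • hh + (z' - n) := by rw [hz'def]; abel
        rw [heq]
        exact adm_add hI1 (adm_smul hI1 _ hhI) hn.2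
      · intro hzav
        refine hnav ?_
        intro u hu
        rcases (hz'occ u hu).2 with h | h
        · exact hzav u h
        · exact hhavoid hzav u h
  · -- non-tip case: peel off the leading term
    set c := PA.basis.repr z w with hc
    set z' := z - c • PA.basis w with hz'def
    have hreprz' : ∀ u, PA.basis.repr z' u
        = PA.basis.repr z u - c * PA.basis.repr (PA.basis w) u := by
      intro u; rw [hz'def]
      simp [PA.basis.repr_self, Finsupp.single_apply, mul_ite, mul_one, mul_zero]
    have hz'w : PA.basis.repr z' w = 0 := by
      rw [hreprz' w, PA.basis.repr_self, ← hc]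
      simp
    have hz'occ : ∀ u, PA.OccursIn u z' → (O.le u w ∧ u ≠ w) ∧ PA.OccursIn u z := by
      intro u hu
      have hne : u ≠ w := fun h => hu (by rw [h]; exact hz'w)
      have hocc : PA.OccursIn u z := by
        intro hcon
        apply hu
        rw [hreprz' u, hcon, PA.basis.repr_self, Finsupp.single_apply,
          if_neg (fun h => hne h.symm)]
        simp
      exact ⟨⟨hzw.2 u hocc, hne⟩, hocc⟩
    rcases eq_or_ne z' 0 with h0 | h0
    · refine ⟨z, ⟨?_, by simpa using adm_zero hI1⟩, fun h => h⟩
      intro u hu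
      have hzeq : z = c • PA.basis w := by
        rw [hz'def] at h0
        exact sub_eq_zero.1 h0
      have huw : u = w := by
        rw [hzeq] at hu
        by_contra hne2
        apply hu
        rw [IsPathAlgebra.OccursIn] at hu
        show PA.basis.repr (c • PA.basis w) u = 0
        rw [map_smul, PA.basis.repr_self, Finsupp.smul_apply, Finsupp.single_apply,
          if_neg (fun h => hne2 h.symm)]
        simp
      rwa [huw]
    · obtain ⟨w', hw'⟩ := PA.exists_isTip O h0
      have hlt := (hz'occ w' hw'.1).1
      obtain ⟨n, hn, hnav⟩ := ih w' hlt z' hw'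
      have hsum : ∀ u, PA.OccursIn u (c • PA.basis w + n) → u = w ∨ PA.OccursIn u n := by
        intro u hu
        by_contra hcon
        push_neg at hcon
        apply hu
        show PA.basis.repr (c • PA.basis w + n) u = 0
        rw [map_add, map_smul, PA.basis.repr_self, Finsupp.add_apply, Finsupp.smul_apply,
          Finsupp.single_apply, if_neg (fun h => hcon.1 h.symm), not_not.1 hcon.2]
        simp
      refine ⟨c • PA.basis w + n, ⟨?_, ?_⟩, ?_⟩
      · intro u hu
        rcases hsum u hu with rfl | h
        · exact hwt
        · exact hn.1 u h
      · have heq : z - (c • PA.basis w + n) = z' - n := by rw [hz'def]; abel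
        rw [heq]
        exact hn.2
      · intro hzav u hu
        have hwav : AvoidsArrow α w := hzav w hzw.1
        rcases hsum u hu with rfl | h
        · exact hwav
        · refine hnav ?_ u h
          intro u' hu'
          exact hzav u' (hz'occ u' hu').2

end NFExists

section Main
variable {k : Type} [Field k] {V : Type} [Quiver.{0} V] [Fintype V]
  {A : Type} [Ring A] [Algebra k A]
variable {PA : IsPathAlgebra k V A} {O : AdmissibleOrder V} {I G G' : Set A}
variable {va vb xp yq xp' yq' : V} {α : va ⟶ vb} {p : Quiver.Path xp va} {q : Quiver.Path vb yq}
variable {p' : Quiver.Path xp' va} {q' : Quiver.Path vb yq'}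

lemma paq_dvd (hG : IsStrictMonomialGB PA O α I G p q)
    (hG' : IsStrictMonomialGB PA O α I G' p' q') :
    (pathPAQ α p' q').Divides (pathPAQ α p q) := by
  have hmem : pathPAQ α p q ∈ tipSet PA O I :=
    ⟨PA.basis _, hG.gb.1 hG.mem, PA.isTip_basis O _⟩
  obtain ⟨g', hg', tg', htg', hdvd⟩ := exists_G_tip_dvd hG'.gb hmem
  have htset : tg' ∈ tipSet PA O I := tipSet_mem (hG'.gb.1 hg') htg'
  rcases divides_pathPAQ hdvd with h | h | h
  · by_cases hgeq : g' = PA.basis (pathPAQ α p' q')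
    · subst hgeq
      have heq : tg' = pathPAQ α p' q' := PA.isTip_unique htg' (PA.isTip_basis O _)
      rwa [heq] at hdvd
    · exact absurd h (hG'.others_avoid g' hg' hgeq tg' htg'.1)
  · exact absurd h (tipSet_not_divide_pq hG htset).1
  · exact absurd h (tipSet_not_divide_pq hG htset).2

lemma paq_eq (hG : IsStrictMonomialGB PA O α I G p q)
    (hG' : IsStrictMonomialGB PA O α I G' p' q') :
    pathPAQ α p q = pathPAQ α p' q' :=
  (paq_dvd hG' hG).eq_of_len_ge (paq_dvd hG hG').len_le

lemma reduced_is_strict (hI : IsAdmissibleIdeal PA I)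
    (hG : IsStrictMonomialGB PA O α I G p q) :
    IsStrictMonomialGB PA O α I (reducedGB PA O I) p q := by
  classical
  have hI1 := hI.1
  have hNF := nf_exists hI hG
  have hsubocc : ∀ (t : PathsIn V) (n : A) (u : PathsIn V),
      PA.OccursIn u (PA.basis t - n) → u = t ∨ PA.OccursIn u n := by
    intro t n u hu
    by_contra hcon
    push_neg at hcon
    apply hu
    show PA.basis.repr (PA.basis t - n) u = 0
    rw [map_sub, PA.basis.repr_self, Finsupp.sub_apply, Finsupp.single_apply,
      if_neg (fun h => hcon.1 h.symm), not_not.1 hcon.2, sub_zero]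
  have hsubI : reducedGB PA O I ⊆ I := by
    rintro x ⟨t, ht, n, hn, rfl⟩
    exact hn.2
  have htip : ∀ (t : PathsIn V), t ∈ minTips PA O I → ∀ (n : A),
      IsNormalForm PA O I (PA.basis t) n → IsTip PA O (PA.basis t - n) t := by
    intro t ht n hn
    have hnt : PA.basis.repr n t = 0 := by
      by_contra h
      exact hn.1 t h ht.1
    have hocc : PA.OccursIn t (PA.basis t - n) := by
      show PA.basis.repr (PA.basis t - n) t ≠ 0
      rw [map_sub, PA.basis.repr_self, Finsupp.sub_apply, hnt, sub_zero,
        Finsupp.single_eq_same]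
      exact one_ne_zero
    obtain ⟨m, hm⟩ := PA.exists_isTip O (PA.ne_zero_of_occurs hocc)
    have hmI : m ∈ tipSet PA O I := tipSet_mem hn.2 hm
    have hmt : m = t := by
      rcases hsubocc t n m hm.1 with h | h
      · exact h
      · exact absurd hmI (hn.1 m h)
    rwa [hmt] at hm
  refine ⟨⟨hsubI, ?_⟩, hG.p_avoids, hG.q_avoids, hG.not_both_trivial, ?_, ?_, ?_, ?_, ?_⟩
  · -- Gröbner basis property
    intro z hz hz0
    obtain ⟨u, hu⟩ := PA.exists_isTip O hz0
    have hut : u ∈ tipSet PA O I := tipSet_mem hz hu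
    obtain ⟨t, htm, hdvd⟩ := exists_minTips_dvd hG.gb hut
    obtain ⟨n, hn, _⟩ := hNF (PA.basis t)
    exact ⟨PA.basis t - n, ⟨t, htm, n, hn, rfl⟩, t, u, htip t htm n hn, hu, hdvd⟩
  · -- mem
    refine ⟨pathPAQ α p q, pathPAQ_mem_minTips hG, 0, ⟨?_, ?_⟩, (sub_zero _).symm⟩
    · intro u hu
      simp [IsPathAlgebra.OccursIn] at hu
    · rw [sub_zero]
      exact hG.gb.1 hG.mem
  · -- others_avoid
    rintro x ⟨t, ht, n, hn, rfl⟩ hxne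
    have htne : t ≠ pathPAQ α p q := by
      rintro rfl
      have h0 : IsNormalForm PA O I (PA.basis (pathPAQ α p q)) 0 :=
        ⟨fun u hu => by simp [IsPathAlgebra.OccursIn] at hu,
          by rw [sub_zero]; exact hG.gb.1 hG.mem⟩
      have hn0 := nf_unique hI1 hn h0
      apply hxne
      rw [hn0, sub_zero]
    obtain ⟨g0, hg0, htip0⟩ := minTips_isTip_G hG ht
    have hg0ne : g0 ≠ PA.basis (pathPAQ α p q) := by
      rintro rfl
      exact htne (PA.isTip_unique htip0 (PA.isTip_basis O _))
    have htav : AvoidsArrow α t := hG.others_avoid g0 hg0 hg0ne t htip0.1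
    have hbav : PA.ElemAvoids α (PA.basis t) := by
      intro u hu
      obtain rfl := PA.occurs_basis hu
      exact htav
    obtain ⟨n', hn', hn'av⟩ := hNF (PA.basis t)
    obtain rfl : n = n' := nf_unique hI1 hn hn'
    have hnav := hn'av hbav
    intro u hu
    rcases hsubocc t n u hu with rfl | h
    · exact htav
    · exact hnav u h
  · -- tips_no_overlap_p
    rintro x ⟨t, ht, n, hn, rfl⟩ u hu
    obtain rfl : u = t := PA.isTip_unique hu (htip t ht n hn)
    obtain ⟨g0, hg0, htip0⟩ := minTips_isTip_G hG ht
    exact hG.tips_no_overlap_p g0 hg0 u htip0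
  · -- tips_no_overlap_q
    rintro x ⟨t, ht, n, hn, rfl⟩ u hu
    obtain rfl : u = t := PA.isTip_unique hu (htip t ht n hn)
    obtain ⟨g0, hg0, htip0⟩ := minTips_isTip_G hG ht
    exact hG.tips_no_overlap_q g0 hg0 u htip0
  · -- tips_no_divide
    rintro x ⟨t, ht, n, hn, rfl⟩ u hu
    obtain rfl : u = t := PA.isTip_unique hu (htip t ht n hn)
    obtain ⟨g0, hg0, htip0⟩ := minTips_isTip_G hG ht
    exact hG.tips_no_divide g0 hg0 u htip0

end Main
/-- let `I` be an admissible ideal of `kQ`, `α` an arrow, and fix an admissible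
order on the set of paths of `Q`.  Then `I` possesses a strict `α`-monomial Gröbner basis
if and only if the reduced Gröbner basis of `I` is strict `α`-monomial.  In particular, if
`𝒢_{p,q}` and `𝒢'_{p',q'}` are two strict `α`-monomial Gröbner bases for `I`, then
`p' = p` and `q' = q`. -/
theorem strict_monomial_GB_iff_reduced_and_unique
    {k : Type} [Field k] {V : Type} [Quiver.{0} V] [Fintype V]
    [∀ a b : V, Fintype (a ⟶ b)]
    {A : Type} [Ring A] [Algebra k A] (PA : IsPathAlgebra k V A)
    (I : Set A) (hI : IsAdmissibleIdeal PA I)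
    (O : AdmissibleOrder V) {va vb : V} (α : va ⟶ vb) :
    ((∃ (xp yq : V) (p : Quiver.Path xp va) (q : Quiver.Path vb yq) (G : Set A),
        IsStrictMonomialGB PA O α I G p q) ↔
      (∃ (xp yq : V) (p : Quiver.Path xp va) (q : Quiver.Path vb yq),
        IsStrictMonomialGB PA O α I (reducedGB PA O I) p q)) ∧
    (∀ (xp yq xp' yq' : V) (p : Quiver.Path xp va) (q : Quiver.Path vb yq)
        (p' : Quiver.Path xp' va) (q' : Quiver.Path vb yq') (G G' : Set A),
      IsStrictMonomialGB PA O α I G p q → IsStrictMonomialGB PA O α I G' p' q' →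
        (⟨xp, va, p⟩ : PathsIn V) = ⟨xp', va, p'⟩ ∧
        (⟨vb, yq, q⟩ : PathsIn V) = ⟨vb, yq', q'⟩) := by
  constructor
  · constructor
    · rintro ⟨xp, yq, p, q, G, hG⟩
      exact ⟨xp, yq, p, q, reduced_is_strict hI hG⟩
    · rintro ⟨xp, yq, p, q, hG⟩
      exact ⟨xp, yq, p, q, reducedGB PA O I, hG⟩
  · intro xp yq xp' yq' p q p' q' G G' hG hG'
    exact pathPAQ_inj hG.q_avoids hG'.q_avoids (paq_eq hG hG')
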